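/- Reweighted Talagrand inequality: if π = Σᵢ wᵢ πᵢ with wᵢ > 0 and each πᵢ satisfies T_c(ν, πᵢ) ≤ C·KL(ν‖πᵢ) for all probability measures ν, then for every μ ≪ π with KL(μ‖π) < ∞, inf_{π̃ ∈ C} T_c(μ, π̃) ≤ C·(KL(μ‖π) − KL(λ*‖w)) ≤ C·KL(μ‖π). -/

import Mathlib

open MeasureTheory ENNReal Classical

/-- Relative entropy `KL(μ‖ν) := ∫ log (dμ/dν) dμ` if `μ ≪ ν` (and the integral is
well-defined), `+∞` otherwise. -/
noncomputable def klDiv {X : Type*} [MeasurableSpace X] (μ ν : Measure X) : ℝ≥0∞ :=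
  if μ ≪ ν ∧ Integrable (MeasureTheory.llr μ ν) μ
  then ENNReal.ofReal (∫ x, MeasureTheory.llr μ ν x ∂μ) else ∞

/-- Optimal transport cost `T_c(μ, ν) := inf over couplings γ of ∫ c dγ`. -/
noncomputable def transportCost {X : Type*} [MeasurableSpace X]
    (c : X → X → ℝ≥0∞) (μ ν : Measure X) : ℝ≥0∞ :=
  ⨅ (γ : Measure (X × X)) (_ : γ.fst = μ ∧ γ.snd = ν), ∫⁻ p, c p.1 p.2 ∂γ

/-- The set of reweighted mixtures `C = {∑ i, λᵢ πᵢ : λ ∈ Δₘ}`. -/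
def mixSet {X : Type*} [MeasurableSpace X] {m : ℕ} (π : Fin m → Measure X) :
    Set (Measure X) :=
  {ν | ∃ l : Fin m → ℝ≥0∞, (∑ i, l i) = 1 ∧ ν = ∑ i, l i • π i}

lemma sub_one_le_mul_log' {t : ℝ} (ht : 0 ≤ t) : t - 1 ≤ t * Real.log t := by
  rcases ht.eq_or_lt with h | h
  · simp [← h]
  · have h1 := Real.log_le_sub_one_of_pos (inv_pos.2 h)
    rw [Real.log_inv] at h1
    have h2 : 1 - t⁻¹ ≤ Real.log t := by linarith
    have h3 := mul_le_mul_of_nonneg_left h2 h.le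
    rw [mul_sub, mul_one, mul_inv_cancel₀ h.ne'] at h3
    linarith

lemma gibbs_pt' {a b : ℝ} (ha : 0 ≤ a) (hb : 0 < b) : a - b ≤ a * Real.log (a / b) := by
  have h := sub_one_le_mul_log' (div_nonneg ha hb.le)
  have h2 := mul_le_mul_of_nonneg_left h hb.le
  have hba : b * (a / b) = a := by field_simp
  rw [mul_sub, mul_one, hba, ← mul_assoc, hba] at h2
  exact h2

lemma mul_log_mul' {r : ℝ} (hr : 0 < r) {t : ℝ} (ht : 0 ≤ t) :
    (r * t) * Real.log (r * t) = r * (t * Real.log t) + (r * Real.log r) * t := by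
  rcases ht.eq_or_lt with h | h
  · simp [← h]
  · rw [Real.log_mul hr.ne' h.ne']; ring

lemma map_finset_sum' {α β ι : Type*} [MeasurableSpace α] [MeasurableSpace β]
    (s : Finset ι) (μ : ι → Measure α) {f : α → β} (hf : Measurable f) :
    (∑ i ∈ s, μ i).map f = ∑ i ∈ s, (μ i).map f := by
  induction s using Finset.cons_induction with
  | empty => simp
  | cons i s hi ih => rw [Finset.sum_cons, Finset.sum_cons, Measure.map_add _ _ hf, ih]

lemma withDensity_finset_sum' {α ι : Type*} [MeasurableSpace α]
    (s : Finset ι) (μ : ι → Measure α) (f : α → ℝ≥0∞) :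
    (∑ i ∈ s, μ i).withDensity f = ∑ i ∈ s, (μ i).withDensity f := by
  induction s using Finset.cons_induction with
  | empty => simp
  | cons i s hi ih => rw [Finset.sum_cons, Finset.sum_cons, withDensity_add_measure, ih]

lemma klDiv_discrete {m : ℕ} (lam w : Fin m → ℝ≥0∞)
    (hw0 : ∀ i, w i ≠ 0) (hwt : ∀ i, w i ≠ ∞) (hlt : ∀ i, lam i ≠ ∞) :
    klDiv (∑ i, lam i • Measure.dirac i) (∑ i, w i • Measure.dirac i)
      = ENNReal.ofReal (∑ i, (lam i).toReal * Real.log ((lam i).toReal / (w i).toReal)) := by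
  set S : Measure (Fin m) := ∑ i, lam i • Measure.dirac i with hS
  set W : Measure (Fin m) := ∑ i, w i • Measure.dirac i with hW
  have hd_meas : Measurable (fun i : Fin m => lam i / w i) := measurable_of_countable _
  have hSW : W.withDensity (fun i => lam i / w i) = S := by
    ext s hs
    rw [withDensity_apply _ hs, hS, Measure.finset_sum_apply, ← lintegral_indicator hs, hW,
      lintegral_finset_sum_measure]
    refine Finset.sum_congr rfl fun j _ => ?_
    rw [lintegral_smul_measure, lintegral_dirac, Measure.smul_apply, smul_eq_mul,
      Measure.dirac_apply' _ hs]
    by_cases hj : j ∈ s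
    · rw [Set.indicator_of_mem hj, Set.indicator_of_mem hj]
      simp only [smul_eq_mul, Pi.one_apply, mul_one]
      rw [ENNReal.mul_div_cancel (hw0 j) (hwt j)]
    · rw [Set.indicator_of_notMem hj, Set.indicator_of_notMem hj, mul_zero, smul_zero]
  have habs : S ≪ W := hSW ▸ withDensity_absolutelyContinuous W _
  haveI : IsFiniteMeasure W := by
    constructor
    rw [hW, Measure.finset_sum_apply]
    simp only [Measure.smul_apply, smul_eq_mul, measure_univ, mul_one]
    exact ENNReal.sum_lt_top.mpr fun i _ => (hwt i).lt_top
  haveI : IsFiniteMeasure S := by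
    constructor
    rw [hS, Measure.finset_sum_apply]
    simp only [Measure.smul_apply, smul_eq_mul, measure_univ, mul_one]
    exact ENNReal.sum_lt_top.mpr fun i _ => (hlt i).lt_top
  have hrn : S.rnDeriv W =ᵐ[W] fun i => lam i / w i := by
    rw [← hSW]; exact Measure.rnDeriv_withDensity W hd_meas
  have hpt : ∀ i, S.rnDeriv W i = lam i / w i := by
    intro i
    have hWi : W {i} ≠ 0 := by
      rw [hW, Measure.finset_sum_apply]
      intro h0
      rw [Finset.sum_eq_zero_iff] at h0
      have h1 := h0 i (Finset.mem_univ i)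
      rw [Measure.smul_apply, smul_eq_mul, Measure.dirac_apply' _ (measurableSet_singleton i),
        Set.indicator_of_mem (Set.mem_singleton i)] at h1
      simp only [Pi.one_apply, mul_one] at h1
      exact hw0 i h1
    by_contra hne
    refine hWi (measure_mono_null ?_ (ae_iff.mp hrn))
    intro x hx
    rw [Set.mem_singleton_iff] at hx
    subst hx
    exact hne
  have hllr : ∀ i, llr S W i = Real.log ((lam i).toReal / (w i).toReal) := by
    intro i
    show Real.log (S.rnDeriv W i).toReal = _
    rw [hpt i, ENNReal.toReal_div]
  obtain ⟨φ, hφeq, hφ⟩ : ∃ φ : Fin m → ℝ, φ = llr S W ∧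
      ∀ i, φ i = Real.log ((lam i).toReal / (w i).toReal) := ⟨llr S W, rfl, hllr⟩
  have hint : Integrable (llr S W) S := Integrable.of_finite
  have hcond : S ≪ W ∧ Integrable (llr S W) S := ⟨habs, hint⟩
  simp only [klDiv, if_pos hcond]
  congr 1
  rw [← hφeq, hS, integral_finset_sum_measure (fun i _ => by
    haveI : IsFiniteMeasure (lam i • Measure.dirac i) := by
      constructor
      simp only [Measure.smul_apply, smul_eq_mul, measure_univ, mul_one]
      exact (hlt i).lt_top
    exact Integrable.of_finite)]
  refine Finset.sum_congr rfl fun i _ => ?_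
  rw [integral_smul_measure, integral_dirac, hφ i, smul_eq_mul]

/-- Reweighted Talagrand inequality: if `π = ∑ i, wᵢ πᵢ` and each `πᵢ`
satisfies `T_c(ν, πᵢ) ≤ C · KL(ν‖πᵢ)`, then for every `μ ≪ π` with `KL(μ‖π) < ∞`,
`inf_{π̃ ∈ C} T_c(μ, π̃) ≤ C · (KL(μ‖π) − KL(λ*‖w)) ≤ C · KL(μ‖π)`. -/
theorem reweighted_talagrand
    {X : Type*} [MeasurableSpace X] [TopologicalSpace X] [PolishSpace X] [BorelSpace X]
    (c : X → X → ℝ≥0∞)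
    (hc : LowerSemicontinuous (fun p : X × X => c p.1 p.2))
    {m : ℕ} (w : Fin m → ℝ≥0∞) (π : Fin m → Measure X) (πmix : Measure X)
    [∀ i, IsProbabilityMeasure (π i)]
    (hw_pos : ∀ i, 0 < w i) (hw_sum : ∑ i, w i = 1)
    (hmix : πmix = ∑ i, w i • π i)
    (C : ℝ≥0∞)
    (hTal : ∀ i, ∀ ν : Measure X, IsProbabilityMeasure ν →
      transportCost c ν (π i) ≤ C * klDiv ν (π i))
    (μ : Measure X) [IsProbabilityMeasure μ]
    (hac : μ ≪ πmix) (hKL_fin : klDiv μ πmix ≠ ∞)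
    (lam : Fin m → ℝ≥0∞)
    (hlam : ∀ i, lam i = w i * ∫⁻ x, μ.rnDeriv πmix x ∂(π i)) :
    (⨅ ν ∈ mixSet π, transportCost c μ ν) ≤
        C * (klDiv μ πmix -
          klDiv (∑ i, lam i • Measure.dirac i) (∑ i, w i • Measure.dirac i)) ∧
      C * (klDiv μ πmix -
          klDiv (∑ i, lam i • Measure.dirac i) (∑ i, w i • Measure.dirac i)) ≤
        C * klDiv μ πmix := by
  classical
  -- basic facts about the weights
  have hw_top : ∀ i, w i ≠ ∞ := by
    intro i
    have h1 : w i ≤ 1 := by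
      rw [← hw_sum]
      exact Finset.single_le_sum (f := w) (fun j _ => zero_le) (Finset.mem_univ i)
    exact (h1.trans_lt one_lt_top).ne
  haveI hπmix_prob : IsProbabilityMeasure πmix := by
    constructor
    rw [hmix, Measure.finset_sum_apply]
    simp only [Measure.smul_apply, smul_eq_mul, measure_univ, mul_one]
    exact hw_sum
  set f := μ.rnDeriv πmix with hf
  have hf_meas : Measurable f := Measure.measurable_rnDeriv μ πmix
  have hf_lt : ∀ᵐ x ∂πmix, f x < ∞ := Measure.rnDeriv_lt_top μ πmix
  have hμ_eq : πmix.withDensity f = μ := Measure.withDensity_rnDeriv_eq μ πmix hac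
  have hle : ∀ i, w i • π i ≤ πmix := by
    intro i
    rw [hmix]
    refine Measure.le_iff'.mpr fun s => ?_
    rw [Measure.finset_sum_apply]
    exact Finset.single_le_sum (f := fun j => (w j • π j) s) (fun j _ => zero_le)
      (Finset.mem_univ i)
  have hac_i : ∀ i, π i ≪ πmix := by
    intro i
    refine Measure.AbsolutelyContinuous.mk fun s hs hs0 => ?_
    have h1 : (w i • π i) s = 0 := le_antisymm (hs0 ▸ Measure.le_iff'.mp (hle i) s) zero_le
    rw [Measure.smul_apply, smul_eq_mul] at h1
    rcases mul_eq_zero.mp h1 with h | h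
    · exact absurd h (hw_pos i).ne'
    · exact h
  have h_cond : μ ≪ πmix ∧ Integrable (llr μ πmix) μ := by
    by_contra h
    exact hKL_fin (by simp only [klDiv, if_neg h])
  -- sum of the lambdas is one
  have hlam_one : ∑ i, lam i = 1 := by
    have h1 : ∀ i : Fin m, lam i = ∫⁻ x, f x ∂(w i • π i) := by
      intro i
      rw [hlam i, lintegral_smul_measure, smul_eq_mul]
    calc ∑ i, lam i = ∑ i, ∫⁻ x, f x ∂(w i • π i) := Finset.sum_congr rfl fun i _ => h1 i
      _ = ∫⁻ x, f x ∂(∑ i, w i • π i) := (lintegral_finset_sum_measure _ _ _).symm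
      _ = μ Set.univ := by rw [← hmix, hf]; exact Measure.lintegral_rnDeriv hac
      _ = 1 := measure_univ
  have hlam_fin : ∀ i, lam i ≠ ∞ := by
    intro i
    have h1 : lam i ≤ 1 := by
      rw [← hlam_one]
      exact Finset.single_le_sum (f := lam) (fun j _ => zero_le) (Finset.mem_univ i)
    exact (h1.trans_lt one_lt_top).ne
  have hwf_mass : ∀ i, ∫⁻ x, w i * f x ∂(π i) = lam i := by
    intro i
    rw [lintegral_const_mul _ hf_meas, ← hlam i]
  have hfi_ne_top : ∀ i, ∫⁻ x, f x ∂(π i) ≠ ∞ := by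
    intro i h
    exact hlam_fin i (by rw [hlam i, h, ENNReal.mul_top (hw_pos i).ne'])
  -- the component measures
  set g : Fin m → X → ℝ≥0∞ := fun i x => (lam i)⁻¹ * (w i * f x) with hg
  have hg_meas : ∀ i, Measurable (g i) := fun i => ((hf_meas.const_mul _).const_mul _)
  have hf0_of_lam0 : ∀ i, lam i = 0 → f =ᵐ[π i] 0 := by
    intro i hi
    have h0 : ∫⁻ x, w i * f x ∂(π i) = 0 := by rw [hwf_mass i, hi]
    have h1 := (lintegral_eq_zero_iff (hf_meas.const_mul (w i))).mp h0
    filter_upwards [h1] with x hx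
    rcases mul_eq_zero.mp hx with h | h
    · exact absurd h (hw_pos i).ne'
    · exact h
  have hg_lt : ∀ i, ∀ᵐ x ∂(π i), g i x < ∞ := by
    intro i
    by_cases hi : lam i = 0
    · filter_upwards [hf0_of_lam0 i hi] with x hx
      have hx0 : f x = 0 := hx
      simp only [hg, hx0, mul_zero]
      exact zero_lt_top
    · have hfl : ∀ᵐ x ∂(π i), f x < ∞ := hf_lt.filter_mono ((hac_i i).ae_le)
      filter_upwards [hfl] with x hx
      exact ENNReal.mul_lt_top (by simp [ENNReal.inv_lt_top, pos_iff_ne_zero, hi])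
        (ENNReal.mul_lt_top (hw_top i).lt_top hx)
  have hgi_mass : ∀ i, lam i ≠ 0 → ∫⁻ x, g i x ∂(π i) = 1 := by
    intro i hi
    rw [hg]
    simp only
    rw [lintegral_const_mul _ (hf_meas.const_mul _), hwf_mass i,
      ENNReal.inv_mul_cancel hi (hlam_fin i)]
  set μi : Fin m → Measure X := fun i => if lam i = 0 then π i else (π i).withDensity (g i)
    with hμi
  have hμi_univ : ∀ i, μi i Set.univ = 1 := by
    intro i
    by_cases hi : lam i = 0
    · simp only [hμi, if_pos hi]
      exact measure_univ
    · simp only [hμi, if_neg hi]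
      rw [withDensity_apply _ MeasurableSet.univ, setLIntegral_univ, hgi_mass i hi]
  have hterm : ∀ i, lam i • μi i = (π i).withDensity (fun x => w i * f x) := by
    intro i
    by_cases hi : lam i = 0
    · rw [hi, zero_smul]
      symm
      rw [← Measure.measure_univ_eq_zero, withDensity_apply _ MeasurableSet.univ,
        setLIntegral_univ, hwf_mass i, hi]
    · simp only [hμi, if_neg hi]
      rw [← withDensity_smul _ (hg_meas i)]
      congr 1
      funext x
      show lam i * ((lam i)⁻¹ * (w i * f x)) = w i * f x
      rw [← mul_assoc, ENNReal.mul_inv_cancel hi (hlam_fin i), one_mul]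
  have hsum_μ : ∑ i, lam i • μi i = μ := by
    have h1 : ∑ i, lam i • μi i = ∑ i, (π i).withDensity (fun x => w i * f x) :=
      Finset.sum_congr rfl fun i _ => hterm i
    have h2 : ∀ i : Fin m, (π i).withDensity (fun x => w i * f x) = (w i • π i).withDensity f := by
      intro i
      rw [withDensity_smul_measure, ← withDensity_smul _ hf_meas]
      congr 1
    have h3 : ∑ i, lam i • μi i = ∑ i, (w i • π i).withDensity f := by
      rw [h1]; exact Finset.sum_congr rfl fun i _ => h2 i
    rw [h3, ← withDensity_finset_sum', ← hmix, hμ_eq]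
  -- the transport cost bound
  set T : Fin m → ℝ≥0∞ := fun i => transportCost c (μi i) (π i) with hT
  set νstar : Measure X := ∑ i, lam i • π i with hνstar
  have hν_mem : νstar ∈ mixSet π := ⟨lam, hlam_one, hνstar⟩
  have hTA : transportCost c μ νstar ≤ ∑ i, lam i * T i := by
    by_cases htop : ∑ i, lam i * T i = ∞
    · rw [htop]; exact le_top
    refine ENNReal.le_of_forall_pos_le_add fun ε hε _ => ?_
    have hfin : ∀ i, lam i * T i ≠ ∞ := by
      intro i h
      exact htop (ENNReal.sum_eq_top.mpr ⟨i, Finset.mem_univ i, h⟩)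
    have hchoice : ∀ i, ∃ γ : Measure (X × X), (γ.fst = μi i ∧ γ.snd = π i) ∧
        lam i * ∫⁻ p, c p.1 p.2 ∂γ ≤ lam i * T i + lam i * ε := by
      intro i
      by_cases hi : lam i = 0
      · refine ⟨(μi i).prod (π i), ⟨Measure.fst_prod, ?_⟩, by simp [hi]⟩
        haveI : IsProbabilityMeasure (μi i) := ⟨hμi_univ i⟩
        exact Measure.snd_prod
      · have hTi : T i ≠ ∞ := by
          intro h
          exact hfin i (by rw [h, ENNReal.mul_top hi])
        have hεne : (ε : ℝ≥0∞) ≠ 0 := by exact_mod_cast hε.ne'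
        have hlt2 : (⨅ (γ : Measure (X × X)) (_ : γ.fst = μi i ∧ γ.snd = π i),
            ∫⁻ p, c p.1 p.2 ∂γ) < T i + ε :=
          ENNReal.lt_add_right hTi hεne
        obtain ⟨γ, hγ⟩ := iInf_lt_iff.mp hlt2
        have hPc : γ.fst = μi i ∧ γ.snd = π i := by
          by_contra hPc
          rw [iInf_neg hPc] at hγ
          exact not_top_lt hγ
        rw [iInf_pos hPc] at hγ
        refine ⟨γ, hPc, ?_⟩
        calc lam i * ∫⁻ p, c p.1 p.2 ∂γ ≤ lam i * (T i + ε) := mul_le_mul_right hγ.le _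
          _ = lam i * T i + lam i * ε := mul_add _ _ _
    choose γs hP hcost using hchoice
    have hγ_fst : (∑ i, lam i • γs i).fst = μ := by
      show (∑ i, lam i • γs i).map Prod.fst = μ
      rw [map_finset_sum' _ _ measurable_fst]
      have h1 : ∀ i : Fin m, (lam i • γs i).map Prod.fst = lam i • μi i := by
        intro i
        rw [Measure.map_smul]
        exact congrArg _ ((hP i).1)
      rw [Finset.sum_congr rfl fun i _ => h1 i, hsum_μ]
    have hγ_snd : (∑ i, lam i • γs i).snd = νstar := by
      show (∑ i, lam i • γs i).map Prod.snd = νstar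
      rw [map_finset_sum' _ _ measurable_snd]
      have h1 : ∀ i : Fin m, (lam i • γs i).map Prod.snd = lam i • π i := by
        intro i
        rw [Measure.map_smul]
        exact congrArg _ ((hP i).2)
      rw [Finset.sum_congr rfl fun i _ => h1 i, hνstar]
    have hγ_cost : ∫⁻ p, c p.1 p.2 ∂(∑ i, lam i • γs i) ≤ (∑ i, lam i * T i) + ε := by
      rw [lintegral_finset_sum_measure]
      calc ∑ i, ∫⁻ p, c p.1 p.2 ∂(lam i • γs i)
          = ∑ i, lam i * ∫⁻ p, c p.1 p.2 ∂(γs i) := by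
            refine Finset.sum_congr rfl fun i _ => ?_
            rw [lintegral_smul_measure, smul_eq_mul]
        _ ≤ ∑ i, (lam i * T i + lam i * ε) := Finset.sum_le_sum fun i _ => hcost i
        _ = (∑ i, lam i * T i) + (∑ i, lam i) * ε := by
            rw [Finset.sum_add_distrib, ← Finset.sum_mul]
        _ = (∑ i, lam i * T i) + ε := by rw [hlam_one, one_mul]
    refine le_trans ?_ hγ_cost
    exact iInf₂_le (∑ i, lam i • γs i) ⟨hγ_fst, hγ_snd⟩
  -- real-valued quantities
  set t : X → ℝ := fun x => (f x).toReal with ht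
  set L : X → ℝ := fun x => (f x).toReal * Real.log ((f x).toReal) with hL
  have hL_int : Integrable L πmix := by
    have h2 := (integrable_withDensity_iff_integrable_smul' hf_meas hf_lt
      (g := llr μ πmix)).mp (by rw [hμ_eq]; exact h_cond.2)
    refine h2.congr (Filter.Eventually.of_forall fun x => ?_)
    show (f x).toReal • llr μ πmix x = L x
    simp only [smul_eq_mul, llr_def, ← hf, hL]
  have hI_val : ∫ x, llr μ πmix x ∂μ = ∫ x, L x ∂πmix := by
    obtain ⟨φ, hφeq⟩ : ∃ φ : X → ℝ, φ = llr μ πmix := ⟨_, rfl⟩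
    have hφx : ∀ x, φ x = Real.log ((f x).toReal) := fun x => by rw [hφeq]; rfl
    rw [← hφeq]
    have hμ_eq' : πmix.withDensity (fun x => (((f x)).toNNReal : ℝ≥0∞)) = μ := by
      rw [withDensity_congr_ae (coe_toNNReal_ae_eq hf_lt)]
      exact hμ_eq
    rw [← hμ_eq', integral_withDensity_eq_integral_smul hf_meas.ennreal_toNNReal]
    refine integral_congr_ae (Filter.Eventually.of_forall fun x => ?_)
    show (f x).toNNReal • φ x = L x
    rw [NNReal.smul_def, hφx x, hL]
    rfl
  have hL_int_i : ∀ i, Integrable L (π i) := by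
    intro i
    have h1 : Integrable L (w i • π i) := hL_int.mono_measure (hle i)
    exact (integrable_smul_measure (hw_pos i).ne' (hw_top i)).mp h1
  have ht_int_i : ∀ i, Integrable t (π i) := fun i =>
    integrable_toReal_of_lintegral_ne_top hf_meas.aemeasurable (hfi_ne_top i)
  have ht_val : ∀ i, ∫ x, t x ∂(π i) = (∫⁻ x, f x ∂(π i)).toReal := fun i =>
    integral_toReal hf_meas.aemeasurable (hf_lt.filter_mono ((hac_i i).ae_le))
  set r : Fin m → ℝ := fun i => ((lam i)⁻¹).toReal * (w i).toReal with hr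
  have hGi_eq : ∀ (i : Fin m) (x : X), (g i x).toReal = r i * t x := by
    intro i x
    rw [hg, hr, ht]
    simp only [ENNReal.toReal_mul, mul_assoc]
  have hr_pos : ∀ i, lam i ≠ 0 → 0 < r i := by
    intro i hi
    rw [hr]
    apply _root_.mul_pos
    · rw [ENNReal.toReal_inv]
      exact inv_pos.2 (ENNReal.toReal_pos hi (hlam_fin i))
    · exact ENNReal.toReal_pos (hw_pos i).ne' (hw_top i)
  set Ii : Fin m → ℝ := fun i => ∫ x, (g i x).toReal * Real.log ((g i x).toReal) ∂(π i) with hIi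
  have hGiL_eq : ∀ i, lam i ≠ 0 → (fun x => (g i x).toReal * Real.log ((g i x).toReal))
      = fun x => r i * L x + (r i * Real.log (r i)) * t x := by
    intro i hi
    funext x
    rw [hGi_eq i x, hL, ht]
    exact mul_log_mul' (hr_pos i hi) ENNReal.toReal_nonneg
  have hGiL_int : ∀ i, lam i ≠ 0 →
      Integrable (fun x => (g i x).toReal * Real.log ((g i x).toReal)) (π i) := by
    intro i hi
    rw [hGiL_eq i hi]
    exact ((hL_int_i i).const_mul _).add ((ht_int_i i).const_mul _)
  have hGi_int : ∀ i, lam i ≠ 0 → Integrable (fun x => (g i x).toReal) (π i) := fun i hi =>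
    integrable_toReal_of_lintegral_ne_top (hg_meas i).aemeasurable
      (by rw [hgi_mass i hi]; exact one_ne_top)
  have hGi_mass : ∀ i, lam i ≠ 0 → ∫ x, (g i x).toReal ∂(π i) = 1 := by
    intro i hi
    rw [integral_toReal (hg_meas i).aemeasurable (hg_lt i), hgi_mass i hi, ENNReal.toReal_one]
  have hIi_val : ∀ i, lam i ≠ 0 → Ii i = r i * (∫ x, L x ∂(π i))
      + (r i * Real.log (r i)) * (∫ x, t x ∂(π i)) := by
    intro i hi
    rw [hIi]
    simp only
    rw [hGiL_eq i hi, integral_add ((hL_int_i i).const_mul _) ((ht_int_i i).const_mul _),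
      integral_const_mul, integral_const_mul]
  have hIi_nonneg : ∀ i, lam i ≠ 0 → 0 ≤ Ii i := by
    intro i hi
    have h1 : ∫ x, ((g i x).toReal - 1) ∂(π i) ≤ Ii i :=
      integral_mono ((hGi_int i hi).sub (integrable_const 1)) (hGiL_int i hi)
        (fun x => sub_one_le_mul_log' ENNReal.toReal_nonneg)
    rw [integral_sub (hGi_int i hi) (integrable_const 1), hGi_mass i hi, integral_const] at h1
    simp only [measure_univ, ENNReal.toReal_one, smul_eq_mul, one_mul, sub_self, probReal_univ, mul_one] at h1
    exact h1
  have hkl_i : ∀ i, lam i ≠ 0 → klDiv (μi i) (π i) = ENNReal.ofReal (Ii i) := by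
    intro i hi
    have hμi_def : μi i = (π i).withDensity (g i) := by simp only [hμi, if_neg hi]
    have habs : μi i ≪ π i := by
      rw [hμi_def]; exact withDensity_absolutelyContinuous _ _
    have hrd : (μi i).rnDeriv (π i) =ᵐ[π i] g i := by
      rw [hμi_def]; exact Measure.rnDeriv_withDensity (π i) (hg_meas i)
    have hllr_pi : llr (μi i) (π i) =ᵐ[π i] fun x => Real.log ((g i x).toReal) := by
      filter_upwards [hrd] with x hx
      show Real.log ((μi i).rnDeriv (π i) x).toReal = _
      rw [hx]
    have hint_mi : Integrable (llr (μi i) (π i)) (μi i) := by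
      have h2 : Integrable (fun x => (g i x).toReal • llr (μi i) (π i) x) (π i) := by
        refine (hGiL_int i hi).congr ?_
        filter_upwards [hllr_pi] with x hx
        rw [hx, smul_eq_mul]
      have h3 := (integrable_withDensity_iff_integrable_smul' (hg_meas i) (hg_lt i)
        (g := llr (μi i) (π i))).mpr h2
      rwa [← hμi_def] at h3
    have hval : ∫ x, llr (μi i) (π i) x ∂(μi i) = Ii i := by
      obtain ⟨φ, hφeq⟩ : ∃ φ : X → ℝ, φ = llr (μi i) (π i) := ⟨_, rfl⟩
      have hφae : φ =ᵐ[π i] fun x => Real.log ((g i x).toReal) := hφeq ▸ hllr_pi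
      rw [← hφeq]
      have hμi' : (π i).withDensity (fun x => (((g i x)).toNNReal : ℝ≥0∞)) = μi i := by
        rw [withDensity_congr_ae (coe_toNNReal_ae_eq (hg_lt i))]
        exact hμi_def.symm
      rw [← hμi', integral_withDensity_eq_integral_smul (hg_meas i).ennreal_toNNReal, hIi]
      refine integral_congr_ae ?_
      filter_upwards [hφae] with x hx
      rw [hx, NNReal.smul_def]
      rfl
    have hcond : μi i ≪ π i ∧ Integrable (llr (μi i) (π i)) (μi i) := ⟨habs, hint_mi⟩
    simp only [klDiv, if_pos hcond, hval]
  have hlam_toReal : ∀ i, (w i).toReal * ∫ x, t x ∂(π i) = (lam i).toReal := by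
    intro i
    rw [ht_val i, ← ENNReal.toReal_mul, ← hlam i]
  have htw : ∀ i : Fin m, (lam i).toReal * Ii i
      + (lam i).toReal * Real.log ((lam i).toReal / (w i).toReal)
      = (w i).toReal * ∫ x, L x ∂(π i) := by
    intro i
    by_cases hi : lam i = 0
    · have hL0 : ∫ x, L x ∂(π i) = 0 := by
        have h1 : L =ᵐ[π i] 0 := by
          filter_upwards [hf0_of_lam0 i hi] with x hx
          have hx0 : f x = 0 := hx
          simp [hL, hx0]
        rw [integral_congr_ae h1]
        simp
      rw [hi, hL0]
      simp
    · have hw' : (w i).toReal ≠ 0 := (ENNReal.toReal_pos (hw_pos i).ne' (hw_top i)).ne'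
      have hl' : (lam i).toReal ≠ 0 := (ENNReal.toReal_pos hi (hlam_fin i)).ne'
      have hr_eq : r i = (w i).toReal / (lam i).toReal := by
        rw [hr]
        simp only [ENNReal.toReal_inv]
        rw [inv_mul_eq_div]
      have hlr : (lam i).toReal * ((w i).toReal / (lam i).toReal) = (w i).toReal := by
        field_simp
      have hwt := hlam_toReal i
      rw [hIi_val i hi, hr_eq, Real.log_div hw' hl', Real.log_div hl' hw']
      linear_combination ((∫ x, L x ∂(π i))
          + (Real.log (w i).toReal - Real.log (lam i).toReal) * (∫ x, t x ∂(π i))) * hlr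
        + (Real.log (w i).toReal - Real.log (lam i).toReal) * hwt
  have hw_sum' : ∑ i, (w i).toReal = 1 := by
    rw [← ENNReal.toReal_sum (fun i _ => hw_top i), hw_sum, ENNReal.toReal_one]
  have hlam_sum' : ∑ i, (lam i).toReal = 1 := by
    rw [← ENNReal.toReal_sum (fun i _ => hlam_fin i), hlam_one, ENNReal.toReal_one]
  have hJ_nonneg : 0 ≤ ∑ i, (lam i).toReal * Real.log ((lam i).toReal / (w i).toReal) := by
    have h1 : ∑ i, ((lam i).toReal - (w i).toReal)
        ≤ ∑ i, (lam i).toReal * Real.log ((lam i).toReal / (w i).toReal) :=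
      Finset.sum_le_sum fun i _ => gibbs_pt' ENNReal.toReal_nonneg
        (ENNReal.toReal_pos (hw_pos i).ne' (hw_top i))
    rwa [Finset.sum_sub_distrib, hlam_sum', hw_sum', sub_self] at h1
  have hIsum : ∫ x, llr μ πmix x ∂μ = ∑ i, (w i).toReal * ∫ x, L x ∂(π i) := by
    rw [hI_val]
    calc ∫ x, L x ∂πmix = ∫ x, L x ∂(∑ i, w i • π i) := by rw [← hmix]
      _ = ∑ i, ∫ x, L x ∂(w i • π i) :=
          integral_finset_sum_measure fun i _ => hL_int.mono_measure (hle i)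
      _ = ∑ i, (w i).toReal * ∫ x, L x ∂(π i) := by
          refine Finset.sum_congr rfl fun i _ => ?_
          rw [integral_smul_measure, smul_eq_mul]
  have hsum_main : ∑ i, (lam i).toReal * Ii i
      = (∫ x, llr μ πmix x ∂μ)
        - ∑ i, (lam i).toReal * Real.log ((lam i).toReal / (w i).toReal) := by
    rw [hIsum, eq_sub_iff_add_eq, ← Finset.sum_add_distrib]
    exact Finset.sum_congr rfl fun i _ => htw i
  have hnn : ∀ i : Fin m, 0 ≤ (lam i).toReal * Ii i := by
    intro i
    by_cases hi : lam i = 0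
    · rw [hi]; simp
    · exact mul_nonneg ENNReal.toReal_nonneg (hIi_nonneg i hi)
  have key : ∑ i, lam i * klDiv (μi i) (π i)
      = klDiv μ πmix
        - klDiv (∑ i, lam i • Measure.dirac i) (∑ i, w i • Measure.dirac i) := by
    have h1 : ∀ i : Fin m, lam i * klDiv (μi i) (π i)
        = ENNReal.ofReal ((lam i).toReal * Ii i) := by
      intro i
      by_cases hi : lam i = 0
      · rw [hi]; simp
      · calc lam i * klDiv (μi i) (π i)
            = ENNReal.ofReal ((lam i).toReal) * ENNReal.ofReal (Ii i) := by
              rw [hkl_i i hi, ENNReal.ofReal_toReal (hlam_fin i)]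
          _ = ENNReal.ofReal ((lam i).toReal * Ii i) :=
              (ENNReal.ofReal_mul ENNReal.toReal_nonneg).symm
    calc ∑ i, lam i * klDiv (μi i) (π i)
        = ∑ i, ENNReal.ofReal ((lam i).toReal * Ii i) := Finset.sum_congr rfl fun i _ => h1 i
      _ = ENNReal.ofReal (∑ i, (lam i).toReal * Ii i) :=
          (ENNReal.ofReal_sum_of_nonneg fun i _ => hnn i).symm
      _ = ENNReal.ofReal ((∫ x, llr μ πmix x ∂μ)
            - ∑ i, (lam i).toReal * Real.log ((lam i).toReal / (w i).toReal)) := by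
          rw [hsum_main]
      _ = ENNReal.ofReal (∫ x, llr μ πmix x ∂μ)
            - ENNReal.ofReal (∑ i, (lam i).toReal
              * Real.log ((lam i).toReal / (w i).toReal)) :=
          ENNReal.ofReal_sub _ hJ_nonneg
      _ = klDiv μ πmix
            - klDiv (∑ i, lam i • Measure.dirac i) (∑ i, w i • Measure.dirac i) := by
          rw [klDiv_discrete lam w (fun i => (hw_pos i).ne') hw_top hlam_fin]
          congr 1
          simp only [klDiv, if_pos h_cond]
  constructor
  · calc (⨅ ν ∈ mixSet π, transportCost c μ ν)
        ≤ transportCost c μ νstar := iInf₂_le νstar hν_mem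
      _ ≤ ∑ i, lam i * T i := hTA
      _ ≤ ∑ i, lam i * (C * klDiv (μi i) (π i)) :=
          Finset.sum_le_sum fun i _ => mul_le_mul_right (hTal i (μi i) ⟨hμi_univ i⟩) _
      _ = C * ∑ i, lam i * klDiv (μi i) (π i) := by
          rw [Finset.mul_sum]
          exact Finset.sum_congr rfl fun i _ => mul_left_comm _ _ _
      _ = C * (klDiv μ πmix
            - klDiv (∑ i, lam i • Measure.dirac i) (∑ i, w i • Measure.dirac i)) := by
          rw [key]
  · exact mul_le_mul_right tsub_le_self C
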